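/- Fix a positive integer l, and for i ∈ {0,1,…,l−1} define g(i) = 2^{i+1} · Σ_{j = 2^{l+1} − 2^{l−i−1}}^{2^{l+1} − 1} 1/j. Then g is strictly decreasing in i. -/
import Mathlib


/-- g(i) = 2^{i+1} · Σ_{j = 2^{l+1} - 2^{l-i-1}}^{2^{l+1} - 1} 1/j -/
noncomputable def g (l i : ℕ) : ℝ :=
  (2 : ℝ) ^ (i + 1) *
    ∑ j ∈ Finset.Icc ((2 : ℕ) ^ (l + 1) - 2 ^ (l - i - 1)) (2 ^ (l + 1) - 1), (1 : ℝ) / j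

theorem g_strictAnti (l : ℕ) (hl : 1 ≤ l) :
    ∀ i : ℕ, i + 1 ≤ l - 1 → g l (i + 1) < g l i := by
  intro i hi
  have hil : i + 2 ≤ l := by omega
  set n := l - i - 2 with hn
  have h1 : l - i - 1 = n + 1 := by omega
  have h2 : l - (i + 1) - 1 = n := by omega
  have hN2 : 2 ^ (n + 2) ≤ 2 ^ (l + 1) := Nat.pow_le_pow_right (by norm_num) (by omega)
  set N := 2 ^ (l + 1) with hNdef
  have hp1 : 2 ^ (n + 1) ≤ N :=
    le_trans (Nat.pow_le_pow_right (by norm_num) (by omega)) hN2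
  have hpn : 2 ^ n ≤ 2 ^ (n + 1) := Nat.pow_le_pow_right (by norm_num) (by omega)
  have hNpos : 1 ≤ N := le_trans (Nat.one_le_two_pow) hp1
  have hIcc : Finset.Icc (N - 2 ^ (n + 1)) (N - 1) = Finset.Ico (N - 2 ^ (n + 1)) N := by
    rw [← Finset.Ico_add_one_right_eq_Icc]
    congr 1
    omega
  have hIcc' : Finset.Icc (N - 2 ^ n) (N - 1) = Finset.Ico (N - 2 ^ n) N := by
    rw [← Finset.Ico_add_one_right_eq_Icc]
    congr 1
    omega
  have hsplit :
      (∑ j ∈ Finset.Ico (N - 2 ^ (n + 1)) (N - 2 ^ n), (1 : ℝ) / j) +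
      (∑ j ∈ Finset.Ico (N - 2 ^ n) N, (1 : ℝ) / j) =
      ∑ j ∈ Finset.Ico (N - 2 ^ (n + 1)) N, (1 : ℝ) / j :=
    Finset.sum_Ico_consecutive _ (by omega) (by omega)
  have key : (∑ j ∈ Finset.Ico (N - 2 ^ n) N, (1 : ℝ) / j) <
      ∑ j ∈ Finset.Ico (N - 2 ^ (n + 1)) (N - 2 ^ n), (1 : ℝ) / j := by
    rw [Finset.sum_Ico_eq_sum_range, Finset.sum_Ico_eq_sum_range]
    have e1 : N - (N - 2 ^ n) = 2 ^ n := by omega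
    have e2 : N - 2 ^ n - (N - 2 ^ (n + 1)) = 2 ^ n := by
      have : 2 ^ (n + 1) = 2 ^ n + 2 ^ n := by ring
      omega
    rw [e1, e2]
    apply Finset.sum_lt_sum_of_nonempty
    · exact Finset.nonempty_range_iff.mpr (by positivity)
    · intro k hk
      have hk' : k < 2 ^ n := Finset.mem_range.mp hk
      apply one_div_lt_one_div_of_lt
      · have e3 : 2 ^ (n + 2) = 2 ^ (n + 1) + 2 ^ (n + 1) := by ring
        have : 0 < N - 2 ^ (n + 1) + k := by omega
        exact_mod_cast this
      · have e3 : 2 ^ (n + 2) = 2 ^ (n + 1) + 2 ^ (n + 1) := by ring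
        have e4 : 2 ^ (n + 1) = 2 ^ n + 2 ^ n := by ring
        have : N - 2 ^ (n + 1) + k < N - 2 ^ n + k := by omega
        exact_mod_cast this
  unfold g
  rw [h1, h2, hIcc, hIcc', ← hsplit]
  have h2pos : (0 : ℝ) < 2 ^ (i + 1) := by positivity
  rw [pow_succ]
  nlinarith [key, h2pos]
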